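/- For A ∈ ℝ^{N×N} (viewed as a complex matrix), there exists a positive definite matrix D ∈ ℂ^{N×N} such that DA is anti-hermitian if and only if A is diagonalizable over ℂ and every eigenvalue of A is purely imaginary. -/

import Mathlib

open Matrix
open scoped ComplexOrder

lemma aux_posdef_stmt7 {n : Type*} [Fintype n] [DecidableEq n] (Q : Matrix n n ℂ)
    (hQ : IsUnit Q.det) : (Qᴴ * Q).PosDef := by
  refine PosDef.of_dotProduct_mulVec_pos (isHermitian_conjTranspose_mul_self _) fun x hx => ?_
  rw [← mulVec_mulVec, dotProduct_mulVec, vecMul_conjTranspose, star_star]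
  refine dotProduct_star_self_pos_iff.mpr fun h => hx ?_
  have hinj := Matrix.mulVec_injective_iff_isUnit.2 ((Matrix.isUnit_iff_isUnit_det Q).2 hQ)
  exact hinj (h.trans (Matrix.mulVec_zero Q).symm)

theorem stmt_7 (N : ℕ) (A : Matrix (Fin N) (Fin N) ℝ) :
    (∃ D : Matrix (Fin N) (Fin N) ℂ, D.PosDef ∧
        (D * A.map Complex.ofReal)ᴴ = -(D * A.map Complex.ofReal))
      ↔ ((∃ P : Matrix (Fin N) (Fin N) ℂ, IsUnit P.det ∧
            ∃ d : Fin N → ℂ, P⁻¹ * A.map Complex.ofReal * P = Matrix.diagonal d) ∧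
          ∀ z ∈ spectrum ℂ (A.map Complex.ofReal), z.re = 0) := by
  set B := A.map Complex.ofReal with hBdef
  constructor
  · rintro ⟨D, hD, hanti⟩
    open scoped MatrixOrder in set C := CFC.sqrt D with hCdef
    have hCherm : C.IsHermitian := by
      open scoped MatrixOrder in exact (CFC.sqrt_nonneg D).posSemidef.1
    have hCC : C * C = D := by
      open scoped MatrixOrder in exact CFC.sqrt_mul_sqrt_self D hD.posSemidef.nonneg
    have hDdet : IsUnit D.det := (Matrix.isUnit_iff_isUnit_det D).1 hD.isUnit
    have hCdet : IsUnit C.det := by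
      rw [isUnit_iff_ne_zero]
      intro h
      rw [isUnit_iff_ne_zero, ← hCC, Matrix.det_mul, h, mul_zero] at hDdet
      exact hDdet rfl
    have hkey : Bᴴ * D = -(D * B) := by
      calc Bᴴ * D = Bᴴ * Dᴴ := by rw [hD.1.eq]
        _ = (D * B)ᴴ := (conjTranspose_mul D B).symm
        _ = -(D * B) := hanti
    have hkey2 : Bᴴ = -(D * B * D⁻¹) := by
      rw [← Matrix.mul_nonsing_inv_cancel_right D Bᴴ hDdet, hkey, Matrix.neg_mul]
    have hM : (C * B * C⁻¹)ᴴ = -(C * B * C⁻¹) := by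
      have e1 : (C * B * C⁻¹)ᴴ = C⁻¹ * Bᴴ * C := by
        rw [conjTranspose_mul, conjTranspose_mul, Matrix.conjTranspose_nonsing_inv,
          hCherm.eq, Matrix.mul_assoc]
      rw [e1, hkey2, ← hCC, Matrix.mul_inv_rev]
      simp only [Matrix.mul_neg, Matrix.neg_mul, neg_inj, Matrix.mul_assoc]
      rw [Matrix.nonsing_inv_mul_cancel_left C _ hCdet, Matrix.nonsing_inv_mul C hCdet,
        Matrix.mul_one]
    set H := Complex.I • (C * B * C⁻¹) with hHdef
    have hH : H.IsHermitian := by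
      show Hᴴ = H
      rw [hHdef, conjTranspose_smul, hM, Complex.star_def, Complex.conj_I, neg_smul, smul_neg,
        neg_neg]
    set U : Matrix (Fin N) (Fin N) ℂ := (hH.eigenvectorUnitary : Matrix (Fin N) (Fin N) ℂ) with hUdef
    have hU1 : star U * U = 1 := mem_unitaryGroup_iff'.mp hH.eigenvectorUnitary.2
    have hU2 : U * star U = 1 := mem_unitaryGroup_iff.mp hH.eigenvectorUnitary.2
    have hUdet : IsUnit U.det := by
      refine IsUnit.of_mul_eq_one (star U).det ?_
      rw [← Matrix.det_mul, hU2, Matrix.det_one]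
    set d : Fin N → ℂ := fun j => -Complex.I * (hH.eigenvalues j : ℂ) with hddef
    have hMdiag : C * B * C⁻¹ = U * Matrix.diagonal d * star U := by
      have h2 : (-Complex.I) • H = C * B * C⁻¹ := by
        rw [hHdef, smul_smul]
        norm_num [Complex.I_mul_I]
      have h3 : (-Complex.I) • Matrix.diagonal (RCLike.ofReal ∘ hH.eigenvalues) =
          Matrix.diagonal d := by
        rw [← Matrix.diagonal_smul, hddef]
        rfl
      rw [← h2, hH.spectral_theorem, Unitary.conjStarAlgAut_apply, ← Matrix.smul_mul, ← Matrix.mul_smul, h3]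
    set P := C⁻¹ * U with hPdef
    have hPdet : IsUnit P.det := by
      rw [hPdef, Matrix.det_mul]
      exact (Matrix.isUnit_nonsing_inv_det C hCdet).mul hUdet
    have hUinv : U⁻¹ = star U := Matrix.inv_eq_left_inv hU1
    have hPinv : P⁻¹ = star U * C := by
      rw [hPdef, Matrix.mul_inv_rev, hUinv, Matrix.nonsing_inv_nonsing_inv C hCdet]
    have hdiag : P⁻¹ * B * P = Matrix.diagonal d := by
      rw [hPinv, hPdef]
      have : star U * C * B * (C⁻¹ * U) = star U * (C * B * C⁻¹) * U := by
        simp only [Matrix.mul_assoc]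
      rw [this, hMdiag]
      simp only [← Matrix.mul_assoc]
      rw [hU1, Matrix.one_mul, Matrix.mul_assoc, hU1, Matrix.mul_one]
    have hBeq : B = P * Matrix.diagonal d * P⁻¹ := by
      rw [← hdiag]
      simp only [Matrix.mul_assoc]
      rw [Matrix.mul_nonsing_inv P hPdet, Matrix.mul_one, ← Matrix.mul_assoc,
        Matrix.mul_nonsing_inv P hPdet, Matrix.one_mul]
    have hBspec : spectrum ℂ B = Set.range d := by
      have hu := ((Matrix.isUnit_iff_isUnit_det P).2 hPdet)
      rw [hBeq, ← hu.unit_spec, ← Matrix.coe_units_inv, spectrum.units_conjugate,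
        spectrum_diagonal]
    refine ⟨⟨P, hPdet, d, hdiag⟩, ?_⟩
    intro z hz
    rw [hBspec] at hz
    obtain ⟨j, rfl⟩ := hz
    simp [hddef]
  · rintro ⟨⟨P, hPdet, d, hPd⟩, hspec⟩
    have hP1 : P * P⁻¹ = 1 := Matrix.mul_nonsing_inv P hPdet
    have hP1' : P⁻¹ * P = 1 := Matrix.nonsing_inv_mul P hPdet
    have hBeq : B = P * Matrix.diagonal d * P⁻¹ := by
      rw [← hPd]
      simp only [Matrix.mul_assoc]
      rw [hP1, Matrix.mul_one, ← Matrix.mul_assoc, hP1, Matrix.one_mul]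
    have hBspec : spectrum ℂ B = Set.range d := by
      have hu := ((Matrix.isUnit_iff_isUnit_det P).2 hPdet)
      rw [hBeq, ← hu.unit_spec, ← Matrix.coe_units_inv, spectrum.units_conjugate,
        spectrum_diagonal]
    have hstar : (fun j => star (d j)) = fun j => -(d j) := by
      funext j
      have h0 : (d j).re = 0 := hspec _ (hBspec ▸ Set.mem_range_self j)
      apply Complex.ext <;> simp [h0]
    refine ⟨(P⁻¹)ᴴ * P⁻¹, aux_posdef_stmt7 _ (Matrix.isUnit_nonsing_inv_det P hPdet), ?_⟩
    have hDB : (P⁻¹)ᴴ * P⁻¹ * B = (P⁻¹)ᴴ * (Matrix.diagonal d * P⁻¹) := by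
      rw [hBeq]
      simp only [Matrix.mul_assoc]
      rw [Matrix.nonsing_inv_mul_cancel_left P _ hPdet]
    rw [hDB, conjTranspose_mul, conjTranspose_mul, conjTranspose_conjTranspose,
      Matrix.diagonal_conjTranspose]
    have : star d = fun j => -(d j) := hstar
    rw [this]
    have : Matrix.diagonal (fun j => -(d j)) = -Matrix.diagonal d := (Matrix.diagonal_neg d).symm
    rw [this]
    simp only [Matrix.neg_mul, Matrix.mul_neg, Matrix.mul_assoc]
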